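/- Let ℓ ≥ 1 and let u be a pre-gelation solution of the coagulation-with-emission equations on [0,T]. Then the first moment satisfies m₁(t) = m₁(0) − ℓ t for all t ∈ [0,T]. -/

import Mathlib

open Finset Filter Topology

noncomputable section

/-- Total reaction probability mass
`M(t) = ∑_{m,n ≥ 1, m+n ≥ ℓ+1} m n u_m(t) u_n(t)`. -/
def Mfun (ℓ : ℕ) (u : ℕ → ℝ → ℝ) (t : ℝ) : ℝ :=
  ∑' p : ℕ × ℕ,
    if 1 ≤ p.1 ∧ 1 ≤ p.2 ∧ ℓ + 1 ≤ p.1 + p.2 then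
      (p.1 : ℝ) * (p.2 : ℝ) * u p.1 t * u p.2 t
    else 0

/-- Right-hand side of the coagulation-with-emission equation for `u n`:
`(1/M)[∑_{i=1}^{n+ℓ−1} i(n+ℓ−i) u_i u_{n+ℓ−i} − 2 n u_n ∑_{i ≥ max(1, ℓ−n+1)} i u_i]`. -/
def coagRHS (ℓ : ℕ) (u : ℕ → ℝ → ℝ) (n : ℕ) (t : ℝ) : ℝ :=
  (1 / Mfun ℓ u t) *
    ((∑ i ∈ Finset.Icc 1 (n + ℓ - 1),
        (i : ℝ) * ((n + ℓ - i : ℕ) : ℝ) * u i t * u (n + ℓ - i) t)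
      - 2 * (n : ℝ) * u n t *
          (∑' i : ℕ, if max 1 (ℓ + 1 - n) ≤ i then (i : ℝ) * u i t else 0))

/-- `u` is a (C¹) solution of the coagulation-with-emission equations on `[0,T]`,
with `M > 0` on `[0,T]` and nonnegative initial data summing to `1`. -/
structure IsCoagSolution (ℓ : ℕ) (T : ℝ) (u : ℕ → ℝ → ℝ) : Prop where
  contDiff : ∀ n, 1 ≤ n → ContDiffOn ℝ 1 (u n) (Set.Icc 0 T)
  Msummable : ∀ t ∈ Set.Icc (0 : ℝ) T,
    Summable (fun p : ℕ × ℕ =>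
      if 1 ≤ p.1 ∧ 1 ≤ p.2 ∧ ℓ + 1 ≤ p.1 + p.2 then
        (p.1 : ℝ) * (p.2 : ℝ) * u p.1 t * u p.2 t
      else 0)
  Mpos : ∀ t ∈ Set.Icc (0 : ℝ) T, 0 < Mfun ℓ u t
  ode : ∀ n, 1 ≤ n → ∀ t ∈ Set.Icc (0 : ℝ) T,
    HasDerivWithinAt (u n) (coagRHS ℓ u n t) (Set.Icc 0 T) t
  init_nonneg : ∀ n, 1 ≤ n → 0 ≤ u n 0
  init_sum : HasSum (fun i : ℕ => if 1 ≤ i then u i 0 else 0) 1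

/-- A finite mass solution: a nonnegative solution whose first-moment series
`m₁(t) = ∑_{i ≥ 1} i u_i(t)` converges uniformly on `[0,T]`. -/
structure IsFiniteMassSolution (ℓ : ℕ) (T : ℝ) (u : ℕ → ℝ → ℝ)
    extends IsCoagSolution ℓ T u : Prop where
  nonneg : ∀ n, 1 ≤ n → ∀ t ∈ Set.Icc (0 : ℝ) T, 0 ≤ u n t
  m1_unif : TendstoUniformlyOn
    (fun N t => ∑ i ∈ Finset.range N, (i : ℝ) * u i t)
    (fun t => ∑' i : ℕ, (i : ℝ) * u i t) atTop (Set.Icc 0 T)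

/-- The `k`-th moment `m_k(t) = ∑_{i ≥ 1} i^k u_i(t)`. -/
def moment (u : ℕ → ℝ → ℝ) (k : ℕ) (t : ℝ) : ℝ :=
  ∑' i : ℕ, if 1 ≤ i then (i : ℝ) ^ k * u i t else 0

/-- A pre-gelation solution: a finite mass solution whose second-moment series
`m₂(t) = ∑_{i ≥ 1} i² u_i(t)` converges uniformly on `[0,T]`. -/
structure IsPreGelationSolution (ℓ : ℕ) (T : ℝ) (u : ℕ → ℝ → ℝ)
    extends IsFiniteMassSolution ℓ T u : Prop where
  m2_unif : TendstoUniformlyOn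
    (fun N t => ∑ i ∈ Finset.range N, (i : ℝ) ^ 2 * u i t)
    (fun t => ∑' i : ℕ, (i : ℝ) ^ 2 * u i t) atTop (Set.Icc 0 T)

namespace FirstMomentAux

def av (v : ℕ → ℝ) (i : ℕ) : ℝ := (i : ℝ) * v i
def bv (v : ℕ → ℝ) (i : ℕ) : ℝ := (i : ℝ) ^ 2 * v i

def valP (v : ℕ → ℝ) (p : ℕ × ℕ) : ℝ := (p.1 : ℝ) * (p.2 : ℝ) * v p.1 * v p.2

def WP (ℓ : ℕ) (v : ℕ → ℝ) (p : ℕ × ℕ) : ℝ :=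
  if 1 ≤ p.1 ∧ 1 ≤ p.2 ∧ ℓ + 1 ≤ p.1 + p.2 then valP v p else 0

def GP (ℓ : ℕ) (v : ℕ → ℝ) (p : ℕ × ℕ) : ℝ :=
  if 1 ≤ p.1 ∧ 1 ≤ p.2 ∧ ℓ + 1 ≤ p.1 + p.2 then (p.1 : ℝ) * valP v p else 0

def EP (ℓ : ℕ) (v : ℕ → ℝ) (p : ℕ × ℕ) : ℝ :=
  if 1 ≤ p.1 ∧ 1 ≤ p.2 ∧ ℓ + 1 ≤ p.1 + p.2 then ((p.1 + p.2 - ℓ : ℕ) : ℝ) * valP v p else 0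

def ENP (ℓ N : ℕ) (v : ℕ → ℝ) (p : ℕ × ℕ) : ℝ :=
  if (1 ≤ p.1 ∧ 1 ≤ p.2 ∧ ℓ + 1 ≤ p.1 + p.2) ∧ p.1 + p.2 < N + ℓ then
    ((p.1 + p.2 - ℓ : ℕ) : ℝ) * valP v p else 0

def ETP (ℓ N : ℕ) (v : ℕ → ℝ) (p : ℕ × ℕ) : ℝ :=
  if (1 ≤ p.1 ∧ 1 ≤ p.2 ∧ ℓ + 1 ≤ p.1 + p.2) ∧ N + ℓ ≤ p.1 + p.2 then
    ((p.1 + p.2 - ℓ : ℕ) : ℝ) * valP v p else 0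

def GNP (ℓ N : ℕ) (v : ℕ → ℝ) (p : ℕ × ℕ) : ℝ :=
  if (1 ≤ p.1 ∧ 1 ≤ p.2 ∧ ℓ + 1 ≤ p.1 + p.2) ∧ p.1 < N then (p.1 : ℝ) * valP v p else 0

def GTP (ℓ N : ℕ) (v : ℕ → ℝ) (p : ℕ × ℕ) : ℝ :=
  if (1 ≤ p.1 ∧ 1 ≤ p.2 ∧ ℓ + 1 ≤ p.1 + p.2) ∧ N ≤ p.1 then (p.1 : ℝ) * valP v p else 0

variable {v : ℕ → ℝ}

lemma av_nonneg (hv : ∀ i, 1 ≤ i → 0 ≤ v i) : ∀ i, 0 ≤ av v i := by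
  intro i
  rcases i with _ | k
  · simp [av]
  · exact mul_nonneg (Nat.cast_nonneg _) (hv _ (Nat.succ_le_succ (Nat.zero_le _)))

lemma bv_nonneg (hv : ∀ i, 1 ≤ i → 0 ≤ v i) : ∀ i, 0 ≤ bv v i := by
  intro i
  rcases i with _ | k
  · simp [bv]
  · exact mul_nonneg (by positivity) (hv _ (Nat.succ_le_succ (Nat.zero_le _)))

lemma av_le_bv (hv : ∀ i, 1 ≤ i → 0 ≤ v i) : ∀ i, av v i ≤ bv v i := by
  intro i
  rcases i with _ | k
  · simp [av, bv]
  · have h1 : (1 : ℝ) ≤ ((k + 1 : ℕ) : ℝ) := by exact_mod_cast Nat.succ_le_succ (Nat.zero_le k)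
    have h2 : 0 ≤ v (k + 1) := hv _ (Nat.succ_le_succ (Nat.zero_le _))
    have h4 : ((k + 1 : ℕ) : ℝ) ≤ ((k + 1 : ℕ) : ℝ) ^ 2 := by
      nlinarith [mul_nonneg (by linarith : (0:ℝ) ≤ ((k + 1 : ℕ) : ℝ))
        (by linarith : (0:ℝ) ≤ ((k + 1 : ℕ) : ℝ) - 1)]
    have h3 : ((k + 1 : ℕ) : ℝ) * v (k + 1) ≤ ((k + 1 : ℕ) : ℝ) ^ 2 * v (k + 1) :=
      mul_le_mul_of_nonneg_right h4 h2
    simpa [av, bv] using h3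

lemma summable_av (hv : ∀ i, 1 ≤ i → 0 ≤ v i) (Sb : Summable (bv v)) : Summable (av v) :=
  Sb.of_nonneg_of_le (av_nonneg hv) (av_le_bv hv)

lemma summable_prod_mul {f g : ℕ → ℝ} (hf : Summable f) (hg : Summable g)
    (hf0 : ∀ i, 0 ≤ f i) (hg0 : ∀ i, 0 ≤ g i) :
    Summable (fun p : ℕ × ℕ => f p.1 * g p.2) :=
  hf.mul_of_nonneg hg (fun i => hf0 i) (fun i => hg0 i)

lemma tsum_prod_mul {f g : ℕ → ℝ} (hf : Summable f) (hg : Summable g) :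
    ∑' p : ℕ × ℕ, f p.1 * g p.2 = (∑' i, f i) * ∑' i, g i := by
  have hfn : Summable fun i => ‖f i‖ := by
    simpa only [Real.norm_eq_abs] using hf.abs
  have hgn : Summable fun i => ‖g i‖ := by
    simpa only [Real.norm_eq_abs] using hg.abs
  exact (tsum_mul_tsum_of_summable_norm hfn hgn).symm

lemma valP_nonneg (hv : ∀ i, 1 ≤ i → 0 ≤ v i) {p : ℕ × ℕ} (h1 : 1 ≤ p.1) (h2 : 1 ≤ p.2) :
    0 ≤ valP v p :=
  mul_nonneg (mul_nonneg (mul_nonneg (Nat.cast_nonneg _) (Nat.cast_nonneg _)) (hv _ h1)) (hv _ h2)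

section pointwise

variable (hv : ∀ i, 1 ≤ i → 0 ≤ v i) (ℓ N : ℕ)
include hv

lemma WP_nonneg (p : ℕ × ℕ) : 0 ≤ WP ℓ v p := by
  unfold WP; split_ifs with h
  · exact valP_nonneg hv h.1 h.2.1
  · exact le_refl 0

lemma GP_nonneg (p : ℕ × ℕ) : 0 ≤ GP ℓ v p := by
  unfold GP; split_ifs with h
  · exact mul_nonneg (Nat.cast_nonneg _) (valP_nonneg hv h.1 h.2.1)
  · exact le_refl 0

lemma EP_nonneg (p : ℕ × ℕ) : 0 ≤ EP ℓ v p := by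
  unfold EP; split_ifs with h
  · exact mul_nonneg (Nat.cast_nonneg _) (valP_nonneg hv h.1 h.2.1)
  · exact le_refl 0

lemma WP_le (p : ℕ × ℕ) : WP ℓ v p ≤ bv v p.1 * av v p.2 := by
  unfold WP; split_ifs with h
  · have : valP v p = av v p.1 * av v p.2 := by unfold valP av; ring
    rw [this]
    exact mul_le_mul_of_nonneg_right (av_le_bv hv p.1) (av_nonneg hv p.2)
  · exact mul_nonneg (bv_nonneg hv p.1) (av_nonneg hv p.2)

lemma GP_le (p : ℕ × ℕ) : GP ℓ v p ≤ bv v p.1 * av v p.2 := by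
  unfold GP; split_ifs with h
  · have : (p.1 : ℝ) * valP v p = bv v p.1 * av v p.2 := by unfold valP av bv; ring
    rw [this]
  · exact mul_nonneg (bv_nonneg hv p.1) (av_nonneg hv p.2)

lemma EP_le (p : ℕ × ℕ) : EP ℓ v p ≤ bv v p.1 * av v p.2 + av v p.1 * bv v p.2 := by
  unfold EP; split_ifs with h
  · have h0 : 0 ≤ valP v p := valP_nonneg hv h.1 h.2.1
    have h1 : ((p.1 + p.2 - ℓ : ℕ) : ℝ) ≤ ((p.1 + p.2 : ℕ) : ℝ) :=
      Nat.cast_le.mpr (Nat.sub_le _ _)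
    have h2 : ((p.1 + p.2 - ℓ : ℕ) : ℝ) * valP v p ≤ ((p.1 + p.2 : ℕ) : ℝ) * valP v p :=
      mul_le_mul_of_nonneg_right h1 h0
    have h3 : ((p.1 + p.2 : ℕ) : ℝ) * valP v p = bv v p.1 * av v p.2 + av v p.1 * bv v p.2 := by
      push_cast; unfold valP av bv; ring
    linarith
  · exact add_nonneg (mul_nonneg (bv_nonneg hv p.1) (av_nonneg hv p.2))
      (mul_nonneg (av_nonneg hv p.1) (bv_nonneg hv p.2))

lemma ENP_nonneg (p : ℕ × ℕ) : 0 ≤ ENP ℓ N v p := by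
  unfold ENP; split_ifs with h
  · exact mul_nonneg (Nat.cast_nonneg _) (valP_nonneg hv h.1.1 h.1.2.1)
  · exact le_refl 0

lemma ETP_nonneg (p : ℕ × ℕ) : 0 ≤ ETP ℓ N v p := by
  unfold ETP; split_ifs with h
  · exact mul_nonneg (Nat.cast_nonneg _) (valP_nonneg hv h.1.1 h.1.2.1)
  · exact le_refl 0

lemma GNP_nonneg (p : ℕ × ℕ) : 0 ≤ GNP ℓ N v p := by
  unfold GNP; split_ifs with h
  · exact mul_nonneg (Nat.cast_nonneg _) (valP_nonneg hv h.1.1 h.1.2.1)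
  · exact le_refl 0

lemma GTP_nonneg (p : ℕ × ℕ) : 0 ≤ GTP ℓ N v p := by
  unfold GTP; split_ifs with h
  · exact mul_nonneg (Nat.cast_nonneg _) (valP_nonneg hv h.1.1 h.1.2.1)
  · exact le_refl 0

lemma ENP_le_EP (p : ℕ × ℕ) : ENP ℓ N v p ≤ EP ℓ v p := by
  unfold ENP EP; split_ifs with h1 h2 h2
  · exact le_refl _
  · exact absurd h1.1 h2
  · exact mul_nonneg (Nat.cast_nonneg _) (valP_nonneg hv h2.1 h2.2.1)
  · exact le_refl 0

lemma ETP_le_EP (p : ℕ × ℕ) : ETP ℓ N v p ≤ EP ℓ v p := by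
  unfold ETP EP; split_ifs with h1 h2 h2
  · exact le_refl _
  · exact absurd h1.1 h2
  · exact mul_nonneg (Nat.cast_nonneg _) (valP_nonneg hv h2.1 h2.2.1)
  · exact le_refl 0

lemma GNP_le_GP (p : ℕ × ℕ) : GNP ℓ N v p ≤ GP ℓ v p := by
  unfold GNP GP; split_ifs with h1 h2 h2
  · exact le_refl _
  · exact absurd h1.1 h2
  · exact mul_nonneg (Nat.cast_nonneg _) (valP_nonneg hv h2.1 h2.2.1)
  · exact le_refl 0

lemma GTP_le_GP (p : ℕ × ℕ) : GTP ℓ N v p ≤ GP ℓ v p := by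
  unfold GTP GP; split_ifs with h1 h2 h2
  · exact le_refl _
  · exact absurd h1.1 h2
  · exact mul_nonneg (Nat.cast_nonneg _) (valP_nonneg hv h2.1 h2.2.1)
  · exact le_refl 0

end pointwise

section summable

variable (hv : ∀ i, 1 ≤ i → 0 ≤ v i) (Sb : Summable (bv v)) (ℓ N : ℕ)
include hv Sb

lemma summable_WP : Summable (WP ℓ v) :=
  (summable_prod_mul Sb (summable_av hv Sb) (bv_nonneg hv) (av_nonneg hv)).of_nonneg_of_le
    (WP_nonneg hv ℓ) (WP_le hv ℓ)

lemma summable_GP : Summable (GP ℓ v) :=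
  (summable_prod_mul Sb (summable_av hv Sb) (bv_nonneg hv) (av_nonneg hv)).of_nonneg_of_le
    (GP_nonneg hv ℓ) (GP_le hv ℓ)

lemma summable_EP : Summable (EP ℓ v) :=
  (((summable_prod_mul Sb (summable_av hv Sb) (bv_nonneg hv) (av_nonneg hv)).add
    (summable_prod_mul (summable_av hv Sb) Sb (av_nonneg hv) (bv_nonneg hv)))).of_nonneg_of_le
    (EP_nonneg hv ℓ) (EP_le hv ℓ)

lemma summable_ENP : Summable (ENP ℓ N v) :=
  (summable_EP hv Sb ℓ).of_nonneg_of_le (ENP_nonneg hv ℓ N) (ENP_le_EP hv ℓ N)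

lemma summable_ETP : Summable (ETP ℓ N v) :=
  (summable_EP hv Sb ℓ).of_nonneg_of_le (ETP_nonneg hv ℓ N) (ETP_le_EP hv ℓ N)

lemma summable_GNP : Summable (GNP ℓ N v) :=
  (summable_GP hv Sb ℓ).of_nonneg_of_le (GNP_nonneg hv ℓ N) (GNP_le_GP hv ℓ N)

lemma summable_GTP : Summable (GTP ℓ N v) :=
  (summable_GP hv Sb ℓ).of_nonneg_of_le (GTP_nonneg hv ℓ N) (GTP_le_GP hv ℓ N)

end summable

lemma reindex_sum (f : ℕ → ℕ → ℝ) (ℓ N : ℕ) (hℓ : 1 ≤ ℓ) :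
    ∑ n ∈ Finset.Ico 1 N, ∑ i ∈ Finset.Icc 1 (n + ℓ - 1), f i (n + ℓ - i)
    = ∑ p ∈ (Finset.Ico 1 (N + ℓ) ×ˢ Finset.Ico 1 (N + ℓ)).filter
        (fun p => ℓ + 1 ≤ p.1 + p.2 ∧ p.1 + p.2 < N + ℓ), f p.1 p.2 := by
  rw [Finset.sum_sigma' (Finset.Ico 1 N) (fun n => Finset.Icc 1 (n + ℓ - 1))
    (fun a s => f s (a + ℓ - s))]
  refine Finset.sum_nbij' (fun x => (x.2, x.1 + ℓ - x.2)) (fun p => ⟨p.1 + p.2 - ℓ, p.1⟩)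
    ?_ ?_ ?_ ?_ ?_
  · intro a ha
    simp only [Finset.mem_sigma, Finset.mem_Ico, Finset.mem_Icc] at ha
    simp only [Finset.mem_filter, Finset.mem_product, Finset.mem_Ico]
    omega
  · intro p hp
    simp only [Finset.mem_filter, Finset.mem_product, Finset.mem_Ico] at hp
    simp only [Finset.mem_sigma, Finset.mem_Ico, Finset.mem_Icc]
    omega
  · intro a ha
    simp only [Finset.mem_sigma, Finset.mem_Ico, Finset.mem_Icc] at ha
    refine Sigma.ext ?_ (heq_of_eq ?_) <;> simp <;> omega
  · intro p hp
    simp only [Finset.mem_filter, Finset.mem_product, Finset.mem_Ico] at hp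
    simp only [Prod.ext_iff, Prod.mk.injEq]
    exact ⟨trivial, by omega⟩
  · intro a ha
    simp only [Finset.mem_sigma, Finset.mem_Ico, Finset.mem_Icc] at ha
    rfl

section main
variable {v : ℕ → ℝ}

lemma Esum (hv : ∀ i, 1 ≤ i → 0 ≤ v i) (Sb : Summable (bv v)) (ℓ : ℕ) :
    ∑' p : ℕ × ℕ, EP ℓ v p
      = 2 * (∑' p : ℕ × ℕ, GP ℓ v p) - (ℓ : ℝ) * ∑' p : ℕ × ℕ, WP ℓ v p := by
  have SG := summable_GP hv Sb ℓ
  have SW := summable_WP hv Sb ℓ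
  have SGs : Summable (fun p : ℕ × ℕ => GP ℓ v (p.2, p.1)) := by
    have h := (Equiv.prodComm ℕ ℕ).summable_iff.mpr SG
    exact h
  have hswap : ∑' p : ℕ × ℕ, GP ℓ v (p.2, p.1) = ∑' p : ℕ × ℕ, GP ℓ v p := by
    have h := (Equiv.prodComm ℕ ℕ).tsum_eq (GP ℓ v)
    exact h
  have hpt : ∀ p : ℕ × ℕ,
      EP ℓ v p = GP ℓ v p + GP ℓ v (p.2, p.1) - (ℓ : ℝ) * WP ℓ v p := by
    intro p
    unfold EP GP WP valP
    by_cases h : 1 ≤ p.1 ∧ 1 ≤ p.2 ∧ ℓ + 1 ≤ p.1 + p.2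
    · have h' : 1 ≤ p.2 ∧ 1 ≤ p.1 ∧ ℓ + 1 ≤ p.2 + p.1 := ⟨h.2.1, h.1, by omega⟩
      rw [if_pos h, if_pos h, if_pos h', if_pos h]
      have hle : ℓ ≤ p.1 + p.2 := by omega
      have hc : ((p.1 + p.2 - ℓ : ℕ) : ℝ) = (p.1 : ℝ) + (p.2 : ℝ) - (ℓ : ℝ) := by
        push_cast [hle]; ring
      rw [hc]; ring
    · have h' : ¬(1 ≤ p.2 ∧ 1 ≤ p.1 ∧ ℓ + 1 ≤ p.2 + p.1) := by omega
      rw [if_neg h, if_neg h, if_neg h', if_neg h]; ring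
  calc ∑' p : ℕ × ℕ, EP ℓ v p
      = ∑' p : ℕ × ℕ, (GP ℓ v p + GP ℓ v (p.2, p.1) - (ℓ : ℝ) * WP ℓ v p) := tsum_congr hpt
    _ = (∑' p : ℕ × ℕ, (GP ℓ v p + GP ℓ v (p.2, p.1)))
          - ∑' p : ℕ × ℕ, (ℓ : ℝ) * WP ℓ v p := Summable.tsum_sub (SG.add SGs) (SW.mul_left _)
    _ = (∑' p : ℕ × ℕ, GP ℓ v p) + (∑' p : ℕ × ℕ, GP ℓ v (p.2, p.1))
          - (ℓ : ℝ) * ∑' p : ℕ × ℕ, WP ℓ v p := by rw [Summable.tsum_add SG SGs, tsum_mul_left]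
    _ = 2 * (∑' p : ℕ × ℕ, GP ℓ v p) - (ℓ : ℝ) * ∑' p : ℕ × ℕ, WP ℓ v p := by
        rw [hswap]; ring

lemma Esplit (hv : ∀ i, 1 ≤ i → 0 ≤ v i) (Sb : Summable (bv v)) (ℓ N : ℕ) :
    ∑' p : ℕ × ℕ, EP ℓ v p
      = (∑' p : ℕ × ℕ, ENP ℓ N v p) + ∑' p : ℕ × ℕ, ETP ℓ N v p := by
  rw [← Summable.tsum_add (summable_ENP hv Sb ℓ N) (summable_ETP hv Sb ℓ N)]
  apply tsum_congr
  intro p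
  unfold EP ENP ETP
  by_cases h : 1 ≤ p.1 ∧ 1 ≤ p.2 ∧ ℓ + 1 ≤ p.1 + p.2
  · by_cases h2 : p.1 + p.2 < N + ℓ
    · rw [if_pos h, if_pos ⟨h, h2⟩, if_neg (by omega : ¬((1 ≤ p.1 ∧ 1 ≤ p.2 ∧ ℓ + 1 ≤ p.1 + p.2) ∧ N + ℓ ≤ p.1 + p.2))]
      ring
    · rw [if_pos h, if_neg (by omega : ¬((1 ≤ p.1 ∧ 1 ≤ p.2 ∧ ℓ + 1 ≤ p.1 + p.2) ∧ p.1 + p.2 < N + ℓ)), if_pos ⟨h, by omega⟩]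
      ring
  · rw [if_neg h, if_neg (by tauto : ¬((1 ≤ p.1 ∧ 1 ≤ p.2 ∧ ℓ + 1 ≤ p.1 + p.2) ∧ p.1 + p.2 < N + ℓ)),
      if_neg (by tauto : ¬((1 ≤ p.1 ∧ 1 ≤ p.2 ∧ ℓ + 1 ≤ p.1 + p.2) ∧ N + ℓ ≤ p.1 + p.2))]
    ring

lemma Gsplit (hv : ∀ i, 1 ≤ i → 0 ≤ v i) (Sb : Summable (bv v)) (ℓ N : ℕ) :
    ∑' p : ℕ × ℕ, GP ℓ v p
      = (∑' p : ℕ × ℕ, GNP ℓ N v p) + ∑' p : ℕ × ℕ, GTP ℓ N v p := by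
  rw [← Summable.tsum_add (summable_GNP hv Sb ℓ N) (summable_GTP hv Sb ℓ N)]
  apply tsum_congr
  intro p
  unfold GP GNP GTP
  by_cases h : 1 ≤ p.1 ∧ 1 ≤ p.2 ∧ ℓ + 1 ≤ p.1 + p.2
  · by_cases h2 : p.1 < N
    · rw [if_pos h, if_pos ⟨h, h2⟩, if_neg (by omega : ¬((1 ≤ p.1 ∧ 1 ≤ p.2 ∧ ℓ + 1 ≤ p.1 + p.2) ∧ N ≤ p.1))]
      ring
    · rw [if_pos h, if_neg (by omega : ¬((1 ≤ p.1 ∧ 1 ≤ p.2 ∧ ℓ + 1 ≤ p.1 + p.2) ∧ p.1 < N)), if_pos ⟨h, by omega⟩]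
      ring
  · rw [if_neg h, if_neg (by tauto : ¬((1 ≤ p.1 ∧ 1 ≤ p.2 ∧ ℓ + 1 ≤ p.1 + p.2) ∧ p.1 < N)),
      if_neg (by tauto : ¬((1 ≤ p.1 ∧ 1 ≤ p.2 ∧ ℓ + 1 ≤ p.1 + p.2) ∧ N ≤ p.1))]
    ring

lemma Asum (ℓ N : ℕ) (hℓ : 1 ≤ ℓ) (hv : ∀ i, 1 ≤ i → 0 ≤ v i) :
    (∑ n ∈ Finset.range N, ((n : ℝ) *
        ∑ i ∈ Finset.Icc 1 (n + ℓ - 1), (i : ℝ) * ((n + ℓ - i : ℕ) : ℝ) * v i * v (n + ℓ - i)))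
    = ∑' p : ℕ × ℕ, ENP ℓ N v p := by
  have hstep1 : (∑ n ∈ Finset.range N, ((n : ℝ) *
        ∑ i ∈ Finset.Icc 1 (n + ℓ - 1), (i : ℝ) * ((n + ℓ - i : ℕ) : ℝ) * v i * v (n + ℓ - i)))
      = ∑ n ∈ Finset.Ico 1 N, ((n : ℝ) *
        ∑ i ∈ Finset.Icc 1 (n + ℓ - 1), (i : ℝ) * ((n + ℓ - i : ℕ) : ℝ) * v i * v (n + ℓ - i)) := by
    refine (Finset.sum_subset ?_ ?_).symm
    · intro x hx
      simp only [Finset.mem_Ico] at hx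
      simp only [Finset.mem_range]
      omega
    · intro x hx hx'
      simp only [Finset.mem_range] at hx
      simp only [Finset.mem_Ico] at hx'
      have hx0 : x = 0 := by omega
      subst hx0
      simp
  rw [hstep1]
  have hstep2 : ∑ n ∈ Finset.Ico 1 N, ((n : ℝ) *
        ∑ i ∈ Finset.Icc 1 (n + ℓ - 1), (i : ℝ) * ((n + ℓ - i : ℕ) : ℝ) * v i * v (n + ℓ - i))
      = ∑ n ∈ Finset.Ico 1 N, ∑ i ∈ Finset.Icc 1 (n + ℓ - 1),
          (fun i j => ((i + j - ℓ : ℕ) : ℝ) * valP v (i, j)) i (n + ℓ - i) := by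
    refine Finset.sum_congr rfl ?_
    intro n hn
    simp only [Finset.mem_Ico] at hn
    rw [Finset.mul_sum]
    refine Finset.sum_congr rfl ?_
    intro i hi
    simp only [Finset.mem_Icc] at hi
    show (n : ℝ) * ((i : ℝ) * ((n + ℓ - i : ℕ) : ℝ) * v i * v (n + ℓ - i))
      = ((i + (n + ℓ - i) - ℓ : ℕ) : ℝ) * ((i : ℝ) * ((n + ℓ - i : ℕ) : ℝ) * v i * v (n + ℓ - i))
    have e1 : i + (n + ℓ - i) - ℓ = n := by omega
    rw [e1]
  rw [hstep2, reindex_sum (fun i j => ((i + j - ℓ : ℕ) : ℝ) * valP v (i, j)) ℓ N hℓ]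
  have hvan : ∀ p ∉ (Finset.Ico 1 (N + ℓ) ×ˢ Finset.Ico 1 (N + ℓ)).filter
      (fun p : ℕ × ℕ => ℓ + 1 ≤ p.1 + p.2 ∧ p.1 + p.2 < N + ℓ), ENP ℓ N v p = 0 := by
    intro p hp
    unfold ENP
    rw [if_neg]
    intro hc
    apply hp
    simp only [Finset.mem_filter, Finset.mem_product, Finset.mem_Ico]
    obtain ⟨⟨h1, h2, h3⟩, h4⟩ := hc
    omega
  rw [tsum_eq_sum hvan]
  refine Finset.sum_congr rfl ?_
  intro p hp
  simp only [Finset.mem_filter, Finset.mem_product, Finset.mem_Ico] at hp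
  have hc : (1 ≤ p.1 ∧ 1 ≤ p.2 ∧ ℓ + 1 ≤ p.1 + p.2) ∧ p.1 + p.2 < N + ℓ := by
    constructor
    · exact ⟨hp.1.1.1, hp.1.2.1, hp.2.1⟩
    · exact hp.2.2
  show ((p.1 + p.2 - ℓ : ℕ) : ℝ) * valP v (p.1, p.2) = ENP ℓ N v p
  unfold ENP
  rw [if_pos hc]

def PSI (ℓ N : ℕ) (v : ℕ → ℝ) (p : ℕ × ℕ) : ℝ :=
  if p.1 < N ∧ max 1 (ℓ + 1 - p.1) ≤ p.2 then
    (p.1 : ℝ) ^ 2 * v p.1 * ((p.2 : ℝ) * v p.2) else 0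

lemma PSI_eq_GNP (ℓ N : ℕ) (p : ℕ × ℕ) : PSI ℓ N v p = GNP ℓ N v p := by
  obtain ⟨n, i⟩ := p
  rcases n with _ | m
  · simp [PSI, GNP]
  · set n := m + 1
    by_cases hc : n < N ∧ max 1 (ℓ + 1 - n) ≤ i
    · have hm := max_le_iff.mp hc.2
      have hc' : (1 ≤ n ∧ 1 ≤ i ∧ ℓ + 1 ≤ n + i) ∧ n < N := by
        refine ⟨⟨by omega, hm.1, by omega⟩, hc.1⟩
      unfold PSI GNP
      rw [if_pos hc, if_pos hc']
      unfold valP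
      push_cast
      ring
    · have hc' : ¬((1 ≤ n ∧ 1 ≤ i ∧ ℓ + 1 ≤ n + i) ∧ n < N) := by
        rw [not_and_or] at hc ⊢
        rcases hc with h | h
        · right; exact h
        · left
          rw [max_le_iff, not_and_or] at h
          intro hh
          rcases h with h | h
          · exact h hh.2.1
          · exact h (by omega)
      unfold PSI GNP
      rw [if_neg hc, if_neg hc']

lemma PSI_le (hv : ∀ i, 1 ≤ i → 0 ≤ v i) (ℓ N : ℕ) (p : ℕ × ℕ) :
    PSI ℓ N v p ≤ bv v p.1 * av v p.2 := by
  unfold PSI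
  split_ifs with h
  · exact le_of_eq (by unfold bv av; ring)
  · exact mul_nonneg (bv_nonneg hv _) (av_nonneg hv _)

lemma summable_PSI (hv : ∀ i, 1 ≤ i → 0 ≤ v i) (Sb : Summable (bv v)) (ℓ N : ℕ) :
    Summable (PSI ℓ N v) :=
  (summable_GNP hv Sb ℓ N).congr (fun p => (PSI_eq_GNP ℓ N p).symm)

lemma Bsum (ℓ N : ℕ) (hv : ∀ i, 1 ≤ i → 0 ≤ v i) (Sb : Summable (bv v)) :
    ∑ n ∈ Finset.range N, ((n : ℝ) ^ 2 * v n *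
        ∑' i : ℕ, if max 1 (ℓ + 1 - n) ≤ i then (i : ℝ) * v i else 0)
    = ∑' p : ℕ × ℕ, GNP ℓ N v p := by
  have Sa := summable_av hv Sb
  have hrow : ∀ n < N, ((n : ℝ) ^ 2 * v n *
      ∑' i : ℕ, if max 1 (ℓ + 1 - n) ≤ i then (i : ℝ) * v i else 0)
      = ∑' i : ℕ, PSI ℓ N v (n, i) := by
    intro n hn
    rw [← tsum_mul_left]
    refine tsum_congr ?_
    intro i
    by_cases h : max 1 (ℓ + 1 - n) ≤ i
    · simp only [PSI, if_pos h, if_pos (⟨hn, h⟩ : n < N ∧ max 1 (ℓ + 1 - n) ≤ i)]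
    · simp only [PSI, if_neg h, mul_zero]
      rw [if_neg]
      intro hc
      exact h hc.2
  have hstep1 : ∑ n ∈ Finset.range N, ((n : ℝ) ^ 2 * v n *
      ∑' i : ℕ, if max 1 (ℓ + 1 - n) ≤ i then (i : ℝ) * v i else 0)
      = ∑ n ∈ Finset.range N, ∑' i : ℕ, PSI ℓ N v (n, i) := by
    refine Finset.sum_congr rfl ?_
    intro n hn
    exact hrow n (Finset.mem_range.mp hn)
  rw [hstep1]
  have hvan : ∀ n ∉ Finset.range N, (∑' i : ℕ, PSI ℓ N v (n, i)) = 0 := by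
    intro n hn
    have hN : ¬ n < N := fun h => hn (Finset.mem_range.mpr h)
    have : ∀ i : ℕ, PSI ℓ N v (n, i) = 0 := by
      intro i
      unfold PSI
      rw [if_neg]
      intro hc
      exact hN hc.1
    rw [tsum_congr this, tsum_zero]
  rw [← tsum_eq_sum (L := SummationFilter.unconditional ℕ) hvan]
  have hrows : ∀ n : ℕ, Summable fun i => PSI ℓ N v (n, i) := by
    intro n
    refine (Sa.mul_left (bv v n)).of_nonneg_of_le ?_ ?_
    · intro i
      rw [PSI_eq_GNP]
      exact GNP_nonneg hv ℓ N _
    · intro i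
      exact PSI_le hv ℓ N (n, i)
  rw [← Summable.tsum_prod' (summable_PSI hv Sb ℓ N) hrows]
  exact tsum_congr (PSI_eq_GNP ℓ N)

set_option maxHeartbeats 1600000 in
lemma GTbound (ℓ N : ℕ) (hv : ∀ i, 1 ≤ i → 0 ≤ v i) (Sb : Summable (bv v)) :
    ∑' p : ℕ × ℕ, GTP ℓ N v p
      ≤ (∑' i, bv v i) * (∑' i : ℕ, if N ≤ i then bv v i else 0) := by
  have Sa := summable_av hv Sb
  have fN0 : ∀ i, 0 ≤ (if N ≤ i then bv v i else 0) := by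
    intro i; split_ifs
    · exact bv_nonneg hv i
    · exact le_refl 0
  have SfN : Summable (fun i => if N ≤ i then bv v i else 0) := by
    refine Sb.of_nonneg_of_le fN0 ?_
    intro i
    split_ifs with h
    · exact le_rfl
    · exact bv_nonneg hv i
  have hle : ∀ p : ℕ × ℕ, GTP ℓ N v p ≤ (if N ≤ p.1 then bv v p.1 else 0) * av v p.2 := by
    intro p
    unfold GTP
    split_ifs with h h2 h2
    · exact le_of_eq (by unfold valP bv av; ring)
    · exact absurd h.2 h2
    · exact mul_nonneg (bv_nonneg hv _) (av_nonneg hv _)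
    · simp
  calc ∑' p : ℕ × ℕ, GTP ℓ N v p
      ≤ ∑' p : ℕ × ℕ, (if N ≤ p.1 then bv v p.1 else 0) * av v p.2 :=
        Summable.tsum_le_tsum hle (summable_GTP hv Sb ℓ N)
          (summable_prod_mul SfN Sa fN0 (av_nonneg hv))
    _ = (∑' i : ℕ, if N ≤ i then bv v i else 0) * (∑' i, av v i) := tsum_prod_mul SfN Sa
    _ ≤ (∑' i : ℕ, if N ≤ i then bv v i else 0) * (∑' i, bv v i) :=
        mul_le_mul_of_nonneg_left (Summable.tsum_le_tsum (av_le_bv hv) Sa Sb) (tsum_nonneg fN0)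
    _ = (∑' i, bv v i) * (∑' i : ℕ, if N ≤ i then bv v i else 0) := mul_comm _ _

set_option maxHeartbeats 1600000 in
lemma ETbound (ℓ N : ℕ) (hv : ∀ i, 1 ≤ i → 0 ≤ v i) (Sb : Summable (bv v)) :
    ∑' p : ℕ × ℕ, ETP ℓ N v p
      ≤ 4 * ((∑' i, bv v i) * (∑' i : ℕ, if N / 2 ≤ i then bv v i else 0)) := by
  have Sa := summable_av hv Sb
  set K := N / 2 with hKdef
  have fK0 : ∀ i, 0 ≤ (if K ≤ i then bv v i else 0) := by
    intro i; split_ifs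
    · exact bv_nonneg hv i
    · exact le_refl 0
  have gK0 : ∀ i, 0 ≤ (if K ≤ i then av v i else 0) := by
    intro i; split_ifs
    · exact av_nonneg hv i
    · exact le_refl 0
  have SfK : Summable (fun i => if K ≤ i then bv v i else 0) := by
    refine Sb.of_nonneg_of_le fK0 ?_
    intro i
    split_ifs with h
    · exact le_rfl
    · exact bv_nonneg hv i
  have SgK : Summable (fun i => if K ≤ i then av v i else 0) := by
    refine Sa.of_nonneg_of_le gK0 ?_
    intro i
    split_ifs with h
    · exact le_rfl
    · exact av_nonneg hv i
  have S1 := summable_prod_mul SfK Sa fK0 (av_nonneg hv)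
  have S2 := summable_prod_mul SgK Sb gK0 (bv_nonneg hv)
  have S3 := summable_prod_mul Sb SgK (bv_nonneg hv) gK0
  have S4 := summable_prod_mul Sa SfK (av_nonneg hv) fK0
  have hle : ∀ p : ℕ × ℕ, ETP ℓ N v p ≤
      (if K ≤ p.1 then bv v p.1 else 0) * av v p.2
      + (if K ≤ p.1 then av v p.1 else 0) * bv v p.2
      + bv v p.1 * (if K ≤ p.2 then av v p.2 else 0)
      + av v p.1 * (if K ≤ p.2 then bv v p.2 else 0) := by
    intro p
    have n1 : 0 ≤ (if K ≤ p.1 then bv v p.1 else 0) * av v p.2 :=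
      mul_nonneg (fK0 _) (av_nonneg hv _)
    have n2 : 0 ≤ (if K ≤ p.1 then av v p.1 else 0) * bv v p.2 :=
      mul_nonneg (gK0 _) (bv_nonneg hv _)
    have n3 : 0 ≤ bv v p.1 * (if K ≤ p.2 then av v p.2 else 0) :=
      mul_nonneg (bv_nonneg hv _) (gK0 _)
    have n4 : 0 ≤ av v p.1 * (if K ≤ p.2 then bv v p.2 else 0) :=
      mul_nonneg (av_nonneg hv _) (fK0 _)
    by_cases hc : (1 ≤ p.1 ∧ 1 ≤ p.2 ∧ ℓ + 1 ≤ p.1 + p.2) ∧ N + ℓ ≤ p.1 + p.2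
    · obtain ⟨⟨h1, h2, h3⟩, h4⟩ := hc
      have hval0 : 0 ≤ valP v p := valP_nonneg hv h1 h2
      have hb2 : ((p.1 + p.2 - ℓ : ℕ) : ℝ) * valP v p
          ≤ bv v p.1 * av v p.2 + av v p.1 * bv v p.2 := by
        have hcle : ((p.1 + p.2 - ℓ : ℕ) : ℝ) ≤ ((p.1 + p.2 : ℕ) : ℝ) :=
          Nat.cast_le.mpr (Nat.sub_le _ _)
        have hmul := mul_le_mul_of_nonneg_right hcle hval0
        have heq : ((p.1 + p.2 : ℕ) : ℝ) * valP v p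
            = bv v p.1 * av v p.2 + av v p.1 * bv v p.2 := by
          push_cast
          unfold valP bv av
          ring
        linarith
      have hval : ETP ℓ N v p = ((p.1 + p.2 - ℓ : ℕ) : ℝ) * valP v p := by
        unfold ETP
        rw [if_pos ⟨⟨h1, h2, h3⟩, h4⟩]
      rw [hval]
      have hor : K ≤ p.1 ∨ K ≤ p.2 := by omega
      rcases hor with h5 | h5
      · rw [if_pos h5, if_pos h5]
        linarith
      · rw [if_pos h5, if_pos h5]
        linarith
    · have hval : ETP ℓ N v p = 0 := by
        unfold ETP
        rw [if_neg hc]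
      rw [hval]
      linarith
  calc ∑' p : ℕ × ℕ, ETP ℓ N v p
      ≤ ∑' p : ℕ × ℕ, ((if K ≤ p.1 then bv v p.1 else 0) * av v p.2
          + (if K ≤ p.1 then av v p.1 else 0) * bv v p.2
          + bv v p.1 * (if K ≤ p.2 then av v p.2 else 0)
          + av v p.1 * (if K ≤ p.2 then bv v p.2 else 0)) :=
        Summable.tsum_le_tsum hle (summable_ETP hv Sb ℓ N) (((S1.add S2).add S3).add S4)
    _ = (∑' i : ℕ, if K ≤ i then bv v i else 0) * (∑' i, av v i)
          + (∑' i : ℕ, if K ≤ i then av v i else 0) * (∑' i, bv v i)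
          + (∑' i, bv v i) * (∑' i : ℕ, if K ≤ i then av v i else 0)
          + (∑' i, av v i) * (∑' i : ℕ, if K ≤ i then bv v i else 0) := by
        rw [Summable.tsum_add ((S1.add S2).add S3) S4, Summable.tsum_add (S1.add S2) S3, Summable.tsum_add S1 S2,
          tsum_prod_mul SfK Sa, tsum_prod_mul SgK Sb, tsum_prod_mul Sb SgK,
          tsum_prod_mul Sa SfK]
    _ ≤ 4 * ((∑' i, bv v i) * (∑' i : ℕ, if K ≤ i then bv v i else 0)) := by
        have hQm2 : (∑' i, av v i) ≤ ∑' i, bv v i := Summable.tsum_le_tsum (av_le_bv hv) Sa Sb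
        have hQ0 : 0 ≤ ∑' i, av v i := tsum_nonneg (av_nonneg hv)
        have hm20 : 0 ≤ ∑' i, bv v i := tsum_nonneg (bv_nonneg hv)
        have hT12 : (∑' i : ℕ, if K ≤ i then av v i else 0)
            ≤ ∑' i : ℕ, if K ≤ i then bv v i else 0 := by
          refine Summable.tsum_le_tsum ?_ SgK SfK
          intro i
          split_ifs with h
          · exact av_le_bv hv i
          · exact le_rfl
        have hT2K0 : 0 ≤ ∑' i : ℕ, if K ≤ i then bv v i else 0 := tsum_nonneg fK0
        have hT1K0 : 0 ≤ ∑' i : ℕ, if K ≤ i then av v i else 0 := tsum_nonneg gK0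
        have e1 : (∑' i : ℕ, if K ≤ i then bv v i else 0) * (∑' i, av v i)
            ≤ (∑' i, bv v i) * (∑' i : ℕ, if K ≤ i then bv v i else 0) := by
          nlinarith [mul_nonneg (sub_nonneg.mpr hQm2) hT2K0]
        have e2 : (∑' i : ℕ, if K ≤ i then av v i else 0) * (∑' i, bv v i)
            ≤ (∑' i, bv v i) * (∑' i : ℕ, if K ≤ i then bv v i else 0) := by
          nlinarith [mul_nonneg (sub_nonneg.mpr hT12) hm20]
        have e3 : (∑' i, bv v i) * (∑' i : ℕ, if K ≤ i then av v i else 0)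
            ≤ (∑' i, bv v i) * (∑' i : ℕ, if K ≤ i then bv v i else 0) :=
          mul_le_mul_of_nonneg_left hT12 hm20
        have e4 : (∑' i, av v i) * (∑' i : ℕ, if K ≤ i then bv v i else 0)
            ≤ (∑' i, bv v i) * (∑' i : ℕ, if K ≤ i then bv v i else 0) :=
          mul_le_mul_of_nonneg_right hQm2 hT2K0
        linarith

set_option maxHeartbeats 1600000 in
lemma key_identity (ℓ N : ℕ) (hℓ : 1 ≤ ℓ) (hv : ∀ i, 1 ≤ i → 0 ≤ v i)
    (Sb : Summable (bv v)) :
    |(∑ n ∈ Finset.range N, ((n : ℝ) *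
          ∑ i ∈ Finset.Icc 1 (n + ℓ - 1), (i : ℝ) * ((n + ℓ - i : ℕ) : ℝ) * v i * v (n + ℓ - i)))
        - (∑ n ∈ Finset.range N, 2 * ((n : ℝ) ^ 2 * v n *
            ∑' i : ℕ, if max 1 (ℓ + 1 - n) ≤ i then (i : ℝ) * v i else 0))
        + (ℓ : ℝ) * (∑' p : ℕ × ℕ, WP ℓ v p)|
      ≤ 4 * ((∑' i, bv v i) * (∑' i : ℕ, if N / 2 ≤ i then bv v i else 0))
        + 2 * ((∑' i, bv v i) * (∑' i : ℕ, if N ≤ i then bv v i else 0)) := by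
  have hA := Asum ℓ N hℓ hv
  have hB : (∑ n ∈ Finset.range N, 2 * ((n : ℝ) ^ 2 * v n *
      ∑' i : ℕ, if max 1 (ℓ + 1 - n) ≤ i then (i : ℝ) * v i else 0))
      = 2 * ∑' p : ℕ × ℕ, GNP ℓ N v p := by
    rw [← Finset.mul_sum, Bsum ℓ N hv Sb]
  rw [hA, hB]
  have hEs := Esplit hv Sb ℓ N
  have hGs := Gsplit hv Sb ℓ N
  have hE := Esum hv Sb ℓ
  have hkeyeq : (∑' p : ℕ × ℕ, ENP ℓ N v p) - 2 * (∑' p : ℕ × ℕ, GNP ℓ N v p)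
      + (ℓ : ℝ) * (∑' p : ℕ × ℕ, WP ℓ v p)
      = 2 * (∑' p : ℕ × ℕ, GTP ℓ N v p) - ∑' p : ℕ × ℕ, ETP ℓ N v p := by
    linarith
  rw [hkeyeq]
  have b1 := ETbound ℓ N hv Sb
  have b2 := GTbound ℓ N hv Sb
  have nn1 : 0 ≤ ∑' p : ℕ × ℕ, ETP ℓ N v p := tsum_nonneg (ETP_nonneg hv ℓ N)
  have nn2 : 0 ≤ ∑' p : ℕ × ℕ, GTP ℓ N v p := tsum_nonneg (GTP_nonneg hv ℓ N)
  have hm20 : 0 ≤ ∑' i, bv v i := tsum_nonneg (bv_nonneg hv)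
  have hTK0 : 0 ≤ ∑' i : ℕ, if N / 2 ≤ i then bv v i else 0 := by
    refine tsum_nonneg ?_
    intro i; split_ifs
    · exact bv_nonneg hv i
    · exact le_refl 0
  have hTN0 : 0 ≤ ∑' i : ℕ, if N ≤ i then bv v i else 0 := by
    refine tsum_nonneg ?_
    intro i; split_ifs
    · exact bv_nonneg hv i
    · exact le_refl 0
  have m1 : 0 ≤ (∑' i, bv v i) * (∑' i : ℕ, if N / 2 ≤ i then bv v i else 0) :=
    mul_nonneg hm20 hTK0
  have m2 : 0 ≤ (∑' i, bv v i) * (∑' i : ℕ, if N ≤ i then bv v i else 0) :=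
    mul_nonneg hm20 hTN0
  rw [abs_le]
  constructor
  · linarith
  · linarith

end main
end FirstMomentAux

set_option maxHeartbeats 4000000 in
/-- for `ℓ ≥ 1` and a pre-gelation solution on `[0,T]`,
the first moment satisfies `m₁(t) = m₁(0) − ℓ t`. -/


theorem first_moment_loss (ℓ : ℕ) (hℓ : 1 ≤ ℓ) (T : ℝ) (hT : 0 < T)
    (u : ℕ → ℝ → ℝ) (hu : IsPreGelationSolution ℓ T u) :
    ∀ t ∈ Set.Icc (0 : ℝ) T, moment u 1 t = moment u 1 0 - (ℓ : ℝ) * t := by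
  classical
  intro t ht
  have hI0 : (0:ℝ) ∈ Set.Icc (0:ℝ) T := Set.left_mem_Icc.mpr hT.le
  have hterm2 : ∀ (i : ℕ), ∀ s ∈ Set.Icc (0:ℝ) T, 0 ≤ (i:ℝ)^2 * u i s := by
    intro i s hs
    rcases i with _ | k
    · simp
    · exact mul_nonneg (by positivity) (hu.nonneg _ (Nat.succ_le_succ (Nat.zero_le _)) s hs)
  have hv : ∀ s ∈ Set.Icc (0:ℝ) T, ∀ i, 1 ≤ i → 0 ≤ u i s :=
    fun s hs i hi => hu.nonneg i hi s hs
  have Sb : ∀ s ∈ Set.Icc (0:ℝ) T, Summable (fun i : ℕ => (i:ℝ)^2 * u i s) := by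
    intro s hs
    have htend := hu.m2_unif.tendsto_at hs
    have hmono : Monotone (fun N => ∑ i ∈ Finset.range N, (i:ℝ)^2 * u i s) := by
      intro a b hab
      exact Finset.sum_le_sum_of_subset_of_nonneg (Finset.range_subset_range.mpr hab)
        (fun i _ _ => hterm2 i s hs)
    exact summable_of_sum_range_le (fun n => hterm2 n s hs)
      (fun n => hmono.ge_of_tendsto htend n)
  have hcont1 : ∀ (n : ℕ), ContinuousOn (fun x => ∑ i ∈ Finset.range n, (i:ℝ) * u i x)
      (Set.Icc 0 T) := by
    intro n
    apply continuousOn_finset_sum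
    intro i _
    rcases i with _ | k
    · simp only [Nat.cast_zero, zero_mul]
      exact continuousOn_const
    · exact continuousOn_const.mul
        ((hu.contDiff _ (Nat.succ_le_succ (Nat.zero_le _))).continuousOn)
  have hcont2 : ∀ (n : ℕ), ContinuousOn (fun x => ∑ i ∈ Finset.range n, (i:ℝ)^2 * u i x)
      (Set.Icc 0 T) := by
    intro n
    apply continuousOn_finset_sum
    intro i _
    rcases i with _ | k
    · simp only [Nat.cast_zero]
      simp only [ne_eq, OfNat.ofNat_ne_zero, not_false_eq_true, zero_pow, zero_mul]
      exact continuousOn_const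
    · exact continuousOn_const.mul
        ((hu.contDiff _ (Nat.succ_le_succ (Nat.zero_le _))).continuousOn)
  have hm1cont : ContinuousOn (fun x => ∑' i : ℕ, (i:ℝ) * u i x) (Set.Icc 0 T) :=
    hu.m1_unif.continuousOn (Filter.Eventually.of_forall hcont1).frequently
  have hm2cont : ContinuousOn (fun x => ∑' i : ℕ, (i:ℝ)^2 * u i x) (Set.Icc 0 T) :=
    hu.m2_unif.continuousOn (Filter.Eventually.of_forall hcont2).frequently
  -- representation of Mfun making its continuity evident
  have hMrepr : ∀ s ∈ Set.Icc (0:ℝ) T, Mfun ℓ u s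
      = (∑' i : ℕ, (i:ℝ) * u i s)^2
        - ∑ p ∈ Finset.Icc 1 ℓ ×ˢ Finset.Icc 1 ℓ,
            (if 1 ≤ p.1 ∧ 1 ≤ p.2 ∧ ℓ + 1 ≤ p.1 + p.2 then 0
             else ((p.1:ℝ) * u p.1 s) * ((p.2:ℝ) * u p.2 s)) := by
    intro s hs
    have hvs : ∀ i, 1 ≤ i → 0 ≤ u i s := hv s hs
    have Sbs : Summable (FirstMomentAux.bv fun i => u i s) := Sb s hs
    have Sas : Summable (fun i : ℕ => (i:ℝ) * u i s) := FirstMomentAux.summable_av hvs Sbs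
    have han : ∀ i : ℕ, 0 ≤ (i:ℝ) * u i s := FirstMomentAux.av_nonneg hvs
    have Sprod : Summable (fun p : ℕ × ℕ => ((p.1:ℝ) * u p.1 s) * ((p.2:ℝ) * u p.2 s)) :=
      FirstMomentAux.summable_prod_mul Sas Sas han han
    have Sc : Summable (fun p : ℕ × ℕ =>
        if 1 ≤ p.1 ∧ 1 ≤ p.2 ∧ ℓ + 1 ≤ p.1 + p.2 then 0
        else ((p.1:ℝ) * u p.1 s) * ((p.2:ℝ) * u p.2 s)) := by
      refine Sprod.of_nonneg_of_le ?_ ?_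
      · intro p
        split_ifs with h
        · exact le_rfl
        · exact mul_nonneg (han p.1) (han p.2)
      · intro p
        split_ifs with h
        · exact mul_nonneg (han p.1) (han p.2)
        · exact le_rfl
    have hpt : ∀ p : ℕ × ℕ,
        (if 1 ≤ p.1 ∧ 1 ≤ p.2 ∧ ℓ + 1 ≤ p.1 + p.2 then
          (p.1:ℝ) * (p.2:ℝ) * u p.1 s * u p.2 s else 0)
        = ((p.1:ℝ) * u p.1 s) * ((p.2:ℝ) * u p.2 s)
          - (if 1 ≤ p.1 ∧ 1 ≤ p.2 ∧ ℓ + 1 ≤ p.1 + p.2 then 0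
             else ((p.1:ℝ) * u p.1 s) * ((p.2:ℝ) * u p.2 s)) := by
      intro p
      by_cases h : 1 ≤ p.1 ∧ 1 ≤ p.2 ∧ ℓ + 1 ≤ p.1 + p.2
      · rw [if_pos h, if_pos h]
        ring
      · rw [if_neg h, if_neg h]
        ring
    have hvan : ∀ p ∉ Finset.Icc 1 ℓ ×ˢ Finset.Icc 1 ℓ,
        (if 1 ≤ p.1 ∧ 1 ≤ p.2 ∧ ℓ + 1 ≤ p.1 + p.2 then 0
         else ((p.1:ℝ) * u p.1 s) * ((p.2:ℝ) * u p.2 s)) = 0 := by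
      intro p hp
      by_cases h : 1 ≤ p.1 ∧ 1 ≤ p.2 ∧ ℓ + 1 ≤ p.1 + p.2
      · rw [if_pos h]
      · rw [if_neg h]
        rcases Nat.eq_zero_or_pos p.1 with h1 | h1
        · rw [h1]
          simp
        · rcases Nat.eq_zero_or_pos p.2 with h2 | h2
          · rw [h2]
            simp
          · exfalso
            apply hp
            simp only [Finset.mem_product, Finset.mem_Icc]
            omega
    have hprod : (∑' p : ℕ × ℕ, ((p.1:ℝ) * u p.1 s) * ((p.2:ℝ) * u p.2 s))
        = (∑' i : ℕ, (i:ℝ) * u i s) * (∑' i : ℕ, (i:ℝ) * u i s) :=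
      FirstMomentAux.tsum_prod_mul Sas Sas
    unfold Mfun
    rw [tsum_congr hpt, Summable.tsum_sub Sprod Sc, hprod, tsum_eq_sum hvan, sq]
  have hMcont : ContinuousOn (Mfun ℓ u) (Set.Icc 0 T) := by
    refine ContinuousOn.congr ?_ (fun s hs => hMrepr s hs)
    refine ContinuousOn.sub (hm1cont.pow 2) ?_
    apply continuousOn_finset_sum
    intro p hp
    simp only [Finset.mem_product, Finset.mem_Icc] at hp
    by_cases h : 1 ≤ p.1 ∧ 1 ≤ p.2 ∧ ℓ + 1 ≤ p.1 + p.2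
    · simp only [if_pos h]
      exact continuousOn_const
    · simp only [if_neg h]
      exact (continuousOn_const.mul ((hu.contDiff _ hp.1.1).continuousOn)).mul
        (continuousOn_const.mul ((hu.contDiff _ hp.2.1).continuousOn))
  obtain ⟨s₀, hs₀I, hs₀min⟩ := isCompact_Icc.exists_isMinOn
    (Set.nonempty_of_mem hI0) hMcont
  have hδpos : 0 < Mfun ℓ u s₀ := hu.Mpos s₀ hs₀I
  have hδle : ∀ s ∈ Set.Icc (0:ℝ) T, Mfun ℓ u s₀ ≤ Mfun ℓ u s :=
    fun s hs => isMinOn_iff.mp hs₀min s hs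
  obtain ⟨s₁, hs₁I, hs₁max⟩ := isCompact_Icc.exists_isMaxOn
    (Set.nonempty_of_mem hI0) hm2cont
  have hCle : ∀ s ∈ Set.Icc (0:ℝ) T,
      (∑' i : ℕ, (i:ℝ)^2 * u i s) ≤ ∑' i : ℕ, (i:ℝ)^2 * u i s₁ :=
    fun s hs => isMaxOn_iff.mp hs₁max s hs
  have hC0 : 0 ≤ ∑' i : ℕ, (i:ℝ)^2 * u i s₁ := tsum_nonneg (fun i => hterm2 i s₁ hs₁I)
  -- uniform smallness of second-moment tails
  have htail : ∀ ε : ℝ, 0 < ε → ∃ N₁ : ℕ, ∀ K, N₁ ≤ K → ∀ s ∈ Set.Icc (0:ℝ) T,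
      (∑' i : ℕ, if K ≤ i then (i:ℝ)^2 * u i s else 0) ≤ ε := by
    intro ε hε
    have h := Metric.tendstoUniformlyOn_iff.mp hu.m2_unif ε hε
    rw [Filter.eventually_atTop] at h
    obtain ⟨N₁, hN₁⟩ := h
    refine ⟨N₁, fun K hK s hs => ?_⟩
    have hd := hN₁ K hK s hs
    rw [Real.dist_eq] at hd
    have Sbs : Summable (fun i : ℕ => (i:ℝ)^2 * u i s) := Sb s hs
    have hvanK : ∀ i ∉ Finset.range K, (if i < K then (i:ℝ)^2 * u i s else 0) = 0 := by
      intro i hi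
      rw [if_neg (fun hc => hi (Finset.mem_range.mpr hc))]
    have Sfin : Summable (fun i : ℕ => if i < K then (i:ℝ)^2 * u i s else 0) :=
      summable_of_ne_finset_zero hvanK
    have hpt : ∀ i : ℕ, (if K ≤ i then (i:ℝ)^2 * u i s else 0)
        = (i:ℝ)^2 * u i s - (if i < K then (i:ℝ)^2 * u i s else 0) := by
      intro i
      by_cases h2 : K ≤ i
      · rw [if_pos h2, if_neg (by omega), sub_zero]
      · rw [if_neg h2, if_pos (by omega)]
        ring
    rw [tsum_congr hpt, Summable.tsum_sub Sbs Sfin, tsum_eq_sum hvanK]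
    have hdrop : ∑ i ∈ Finset.range K, (if i < K then (i:ℝ)^2 * u i s else 0)
        = ∑ i ∈ Finset.range K, (i:ℝ)^2 * u i s :=
      Finset.sum_congr rfl (fun i hi => if_pos (Finset.mem_range.mp hi))
    rw [hdrop]
    have := le_abs_self ((∑' i : ℕ, (i:ℝ)^2 * u i s) - ∑ i ∈ Finset.range K, (i:ℝ)^2 * u i s)
    linarith
  -- key uniform derivative estimate
  have key : ∀ ε : ℝ, 0 < ε → ∃ N₀ : ℕ, ∀ N, N₀ ≤ N → ∀ s ∈ Set.Icc (0:ℝ) T,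
      |(∑ n ∈ Finset.range N, (n:ℝ) * coagRHS ℓ u n s) + (ℓ:ℝ)| ≤ ε := by
    intro ε hε
    set δ := Mfun ℓ u s₀ with hδdef
    set C := ∑' i : ℕ, (i:ℝ)^2 * u i s₁ with hCdef
    have hC1 : (0:ℝ) < 6 * (C + 1) := by linarith
    have hεp : 0 < δ * ε / (6 * (C + 1)) := div_pos (mul_pos hδpos hε) hC1
    obtain ⟨N₁, hN₁⟩ := htail _ hεp
    refine ⟨2 * N₁ + 2, fun N hN s hs => ?_⟩
    have hvs : ∀ i, 1 ≤ i → 0 ≤ u i s := hv s hs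
    have Sbs : Summable (FirstMomentAux.bv fun i => u i s) := Sb s hs
    have hMpos := hu.Mpos s hs
    have hMne : Mfun ℓ u s ≠ 0 := ne_of_gt hMpos
    have hDB : (∑ n ∈ Finset.range N, (n:ℝ) * coagRHS ℓ u n s)
        = (1 / Mfun ℓ u s) *
          ((∑ n ∈ Finset.range N, ((n:ℝ) * ∑ i ∈ Finset.Icc 1 (n + ℓ - 1),
              (i:ℝ) * ((n + ℓ - i : ℕ):ℝ) * u i s * u (n + ℓ - i) s))
           - ∑ n ∈ Finset.range N, 2 * ((n:ℝ)^2 * u n s *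
              ∑' i : ℕ, if max 1 (ℓ + 1 - n) ≤ i then (i:ℝ) * u i s else 0)) := by
      rw [← Finset.sum_sub_distrib, Finset.mul_sum]
      refine Finset.sum_congr rfl ?_
      intro n _
      unfold coagRHS
      ring
    have habs : (∑ n ∈ Finset.range N, (n:ℝ) * coagRHS ℓ u n s) + (ℓ:ℝ)
        = ((∑ n ∈ Finset.range N, ((n:ℝ) * ∑ i ∈ Finset.Icc 1 (n + ℓ - 1),
              (i:ℝ) * ((n + ℓ - i : ℕ):ℝ) * u i s * u (n + ℓ - i) s))
           - (∑ n ∈ Finset.range N, 2 * ((n:ℝ)^2 * u n s *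
              ∑' i : ℕ, if max 1 (ℓ + 1 - n) ≤ i then (i:ℝ) * u i s else 0))
           + (ℓ:ℝ) * Mfun ℓ u s) / Mfun ℓ u s := by
      rw [hDB]
      field_simp
    have hKI := FirstMomentAux.key_identity ℓ N hℓ hvs Sbs
    have hMW : Mfun ℓ u s = ∑' p : ℕ × ℕ, FirstMomentAux.WP ℓ (fun i => u i s) p := rfl
    have hT2K := hN₁ (N / 2) (by omega) s hs
    have hT2N := hN₁ N (by omega) s hs
    have hm2C : (∑' i : ℕ, (i:ℝ)^2 * u i s) ≤ C := hCle s hs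
    have hm20 : 0 ≤ ∑' i : ℕ, (i:ℝ)^2 * u i s := tsum_nonneg (fun i => hterm2 i s hs)
    have hTK0 : 0 ≤ ∑' i : ℕ, (if N / 2 ≤ i then (i:ℝ)^2 * u i s else 0) := by
      refine tsum_nonneg ?_
      intro i
      split_ifs with h
      · exact hterm2 i s hs
      · exact le_rfl
    have hTN0 : 0 ≤ ∑' i : ℕ, (if N ≤ i then (i:ℝ)^2 * u i s else 0) := by
      refine tsum_nonneg ?_
      intro i
      split_ifs with h
      · exact hterm2 i s hs
      · exact le_rfl
    have hbound : |(∑ n ∈ Finset.range N, ((n:ℝ) * ∑ i ∈ Finset.Icc 1 (n + ℓ - 1),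
              (i:ℝ) * ((n + ℓ - i : ℕ):ℝ) * u i s * u (n + ℓ - i) s))
           - (∑ n ∈ Finset.range N, 2 * ((n:ℝ)^2 * u n s *
              ∑' i : ℕ, if max 1 (ℓ + 1 - n) ≤ i then (i:ℝ) * u i s else 0))
           + (ℓ:ℝ) * Mfun ℓ u s| ≤ δ * ε := by
      rw [hMW]
      calc |(∑ n ∈ Finset.range N, ((n:ℝ) * ∑ i ∈ Finset.Icc 1 (n + ℓ - 1),
              (i:ℝ) * ((n + ℓ - i : ℕ):ℝ) * u i s * u (n + ℓ - i) s))
           - (∑ n ∈ Finset.range N, 2 * ((n:ℝ)^2 * u n s *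
              ∑' i : ℕ, if max 1 (ℓ + 1 - n) ≤ i then (i:ℝ) * u i s else 0))
           + (ℓ:ℝ) * ∑' p : ℕ × ℕ, FirstMomentAux.WP ℓ (fun i => u i s) p|
          ≤ 4 * ((∑' i : ℕ, (i:ℝ)^2 * u i s)
                * (∑' i : ℕ, if N / 2 ≤ i then (i:ℝ)^2 * u i s else 0))
            + 2 * ((∑' i : ℕ, (i:ℝ)^2 * u i s)
                * (∑' i : ℕ, if N ≤ i then (i:ℝ)^2 * u i s else 0)) := hKI
        _ ≤ δ * ε := by
          have e1 : (∑' i : ℕ, (i:ℝ)^2 * u i s)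
              * (∑' i : ℕ, if N / 2 ≤ i then (i:ℝ)^2 * u i s else 0)
              ≤ (C + 1) * (δ * ε / (6 * (C + 1))) :=
            mul_le_mul (by linarith) hT2K hTK0 (by linarith)
          have e2 : (∑' i : ℕ, (i:ℝ)^2 * u i s)
              * (∑' i : ℕ, if N ≤ i then (i:ℝ)^2 * u i s else 0)
              ≤ (C + 1) * (δ * ε / (6 * (C + 1))) :=
            mul_le_mul (by linarith) hT2N hTN0 (by linarith)
          have e3 : 6 * ((C + 1) * (δ * ε / (6 * (C + 1)))) = δ * ε := by
            field_simp
          linarith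
    rw [habs, abs_div, abs_of_pos hMpos, div_le_iff₀ hMpos]
    calc |(∑ n ∈ Finset.range N, ((n:ℝ) * ∑ i ∈ Finset.Icc 1 (n + ℓ - 1),
              (i:ℝ) * ((n + ℓ - i : ℕ):ℝ) * u i s * u (n + ℓ - i) s))
           - (∑ n ∈ Finset.range N, 2 * ((n:ℝ)^2 * u n s *
              ∑' i : ℕ, if max 1 (ℓ + 1 - n) ≤ i then (i:ℝ) * u i s else 0))
           + (ℓ:ℝ) * Mfun ℓ u s| ≤ δ * ε := hbound
      _ ≤ ε * Mfun ℓ u s := by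
        nlinarith [mul_nonneg hε.le (sub_nonneg.mpr (hδle s hs))]
  -- final assembly via the mean value inequality
  have hm1eq : ∀ x : ℝ, moment u 1 x = ∑' i : ℕ, (i:ℝ) * u i x := by
    intro x
    unfold moment
    refine tsum_congr ?_
    intro i
    rcases i with _ | k
    · simp
    · rw [if_pos (Nat.succ_le_succ (Nat.zero_le _)), pow_one]
  have hfinal : ∀ ε : ℝ, 0 < ε →
      |(∑' i : ℕ, (i:ℝ) * u i t) + (ℓ:ℝ) * t - ∑' i : ℕ, (i:ℝ) * u i 0| ≤ ε * (T + 2) := by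
    intro ε hε
    obtain ⟨N₀, hN₀⟩ := key ε hε
    have h1 := Metric.tendstoUniformlyOn_iff.mp hu.m1_unif ε hε
    rw [Filter.eventually_atTop] at h1
    obtain ⟨N₂, hN₂⟩ := h1
    set N := max N₀ N₂ with hNdef
    have hdt := hN₂ N (le_max_right _ _) t ht
    have hd0 := hN₂ N (le_max_right _ _) 0 hI0
    rw [Real.dist_eq] at hdt hd0
    have hderiv : ∀ s ∈ Set.Icc (0:ℝ) T,
        HasDerivWithinAt (fun x => (∑ i ∈ Finset.range N, (i:ℝ) * u i x) + (ℓ:ℝ) * x)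
          ((∑ n ∈ Finset.range N, (n:ℝ) * coagRHS ℓ u n s) + (ℓ:ℝ)) (Set.Icc 0 T) s := by
      intro s hs
      refine HasDerivWithinAt.add ?_ ?_
      · refine HasDerivWithinAt.fun_sum ?_
        intro n _
        rcases n with _ | k
        · simp only [Nat.cast_zero, zero_mul]
          exact hasDerivWithinAt_const s _ 0
        · exact (hu.ode _ (Nat.succ_le_succ (Nat.zero_le _)) s hs).const_mul _
      · simpa using (hasDerivWithinAt_id s (Set.Icc (0:ℝ) T)).const_mul (ℓ:ℝ)
    have hbd : ∀ s ∈ Set.Icc (0:ℝ) T,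
        ‖(∑ n ∈ Finset.range N, (n:ℝ) * coagRHS ℓ u n s) + (ℓ:ℝ)‖ ≤ ε := by
      intro s hs
      rw [Real.norm_eq_abs]
      exact hN₀ N (le_max_left _ _) s hs
    have hmvt := (convex_Icc (0:ℝ) T).norm_image_sub_le_of_norm_hasDerivWithin_le
      hderiv hbd hI0 ht
    rw [Real.norm_eq_abs, Real.norm_eq_abs] at hmvt
    have htT : |t - 0| ≤ T := by
      rw [sub_zero, abs_of_nonneg ht.1]
      exact ht.2
    have hmvt2 : |((∑ i ∈ Finset.range N, (i:ℝ) * u i t) + (ℓ:ℝ) * t)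
        - ((∑ i ∈ Finset.range N, (i:ℝ) * u i 0) + (ℓ:ℝ) * 0)| ≤ ε * T := by
      calc |((∑ i ∈ Finset.range N, (i:ℝ) * u i t) + (ℓ:ℝ) * t)
          - ((∑ i ∈ Finset.range N, (i:ℝ) * u i 0) + (ℓ:ℝ) * 0)| ≤ ε * |t - 0| := hmvt
        _ ≤ ε * T := mul_le_mul_of_nonneg_left htT hε.le
    have expand : (∑' i : ℕ, (i:ℝ) * u i t) + (ℓ:ℝ) * t - (∑' i : ℕ, (i:ℝ) * u i 0)
        = ((∑' i : ℕ, (i:ℝ) * u i t) - (∑ i ∈ Finset.range N, (i:ℝ) * u i t))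
          + (((∑ i ∈ Finset.range N, (i:ℝ) * u i t) + (ℓ:ℝ) * t)
              - ((∑ i ∈ Finset.range N, (i:ℝ) * u i 0) + (ℓ:ℝ) * 0))
          + ((∑ i ∈ Finset.range N, (i:ℝ) * u i 0) - (∑' i : ℕ, (i:ℝ) * u i 0)) := by
      ring
    rw [expand]
    have tri1 := abs_add_le
      (((∑' i : ℕ, (i:ℝ) * u i t) - (∑ i ∈ Finset.range N, (i:ℝ) * u i t))
        + (((∑ i ∈ Finset.range N, (i:ℝ) * u i t) + (ℓ:ℝ) * t)
            - ((∑ i ∈ Finset.range N, (i:ℝ) * u i 0) + (ℓ:ℝ) * 0)))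
      ((∑ i ∈ Finset.range N, (i:ℝ) * u i 0) - (∑' i : ℕ, (i:ℝ) * u i 0))
    have tri2 := abs_add_le
      ((∑' i : ℕ, (i:ℝ) * u i t) - (∑ i ∈ Finset.range N, (i:ℝ) * u i t))
      (((∑ i ∈ Finset.range N, (i:ℝ) * u i t) + (ℓ:ℝ) * t)
          - ((∑ i ∈ Finset.range N, (i:ℝ) * u i 0) + (ℓ:ℝ) * 0))
    have habs0 : |(∑ i ∈ Finset.range N, (i:ℝ) * u i 0) - (∑' i : ℕ, (i:ℝ) * u i 0)|
        = |(∑' i : ℕ, (i:ℝ) * u i 0) - (∑ i ∈ Finset.range N, (i:ℝ) * u i 0)| :=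
      abs_sub_comm _ _
    linarith
  have hX : (∑' i : ℕ, (i:ℝ) * u i t) + (ℓ:ℝ) * t - (∑' i : ℕ, (i:ℝ) * u i 0) = 0 := by
    by_contra hne
    have hpos : 0 < |(∑' i : ℕ, (i:ℝ) * u i t) + (ℓ:ℝ) * t - ∑' i : ℕ, (i:ℝ) * u i 0| :=
      abs_pos.mpr hne
    have hT2 : (0:ℝ) < T + 2 := by linarith
    have h1 := hfinal
      (|(∑' i : ℕ, (i:ℝ) * u i t) + (ℓ:ℝ) * t - ∑' i : ℕ, (i:ℝ) * u i 0| / (2 * (T + 2)))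
      (by positivity)
    have h2 : (|(∑' i : ℕ, (i:ℝ) * u i t) + (ℓ:ℝ) * t - ∑' i : ℕ, (i:ℝ) * u i 0|
        / (2 * (T + 2))) * (T + 2)
        = |(∑' i : ℕ, (i:ℝ) * u i t) + (ℓ:ℝ) * t - ∑' i : ℕ, (i:ℝ) * u i 0| / 2 := by
      field_simp
    rw [h2] at h1
    linarith
  rw [hm1eq, hm1eq]
  linarith
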